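/- Composition of tree-expanded series distributes over the over and under products in the right-module sense: (A / D)∘C = (A∘C) / (D∘C) and (A ∖ D)∘C = (A∘C) ∖ (D∘C). -/

import Mathlib

/-- Planar binary trees: a leaf, or an internal vertex with two subtrees. -/
inductive PBT : Type
  | leaf : PBT
  | node : PBT → PBT → PBT
  deriving DecidableEq

namespace PBT

/-- Number of internal vertices of a planar binary tree. -/
def size : PBT → ℕ
  | leaf => 0
  | node l r => size l + size r + 1

/-- `under u v` ("u ∖ v") grafts `v` at the rightmost leaf of `u`. -/
def under : PBT → PBT → PBT
  | leaf, v => v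
  | node l r, v => node l (under r v)

/-- `over u v` ("u / v") grafts `u` at the leftmost leaf of `v`. -/
def over' (u : PBT) : PBT → PBT
  | leaf => u
  | node l r => node (over' u l) r

/-- Number of internal vertices on the rightmost path (right spine). -/
def rightSpine : PBT → ℕ
  | leaf => 0
  | node _ r => rightSpine r + 1

/-- The left comb with `p` internal vertices. -/
def leftComb : ℕ → PBT
  | 0 => leaf
  | p + 1 => node (leftComb p) leaf

/-- The right comb with `q` internal vertices. -/
def rightComb : ℕ → PBT
  | 0 => leaf
  | q + 1 => node leaf (rightComb q)

/-- The list of all factorizations `t = u ∖ v` (each exactly once). -/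
def underFactors : PBT → List (PBT × PBT)
  | leaf => [(leaf, leaf)]
  | node l r => (leaf, node l r) :: (underFactors r).map (fun p => (node l p.1, p.2))

/-- The list of all factorizations `t = u / v` (each exactly once). -/
def overFactors : PBT → List (PBT × PBT)
  | leaf => [(leaf, leaf)]
  | node l r => (node l r, leaf) :: (overFactors l).map (fun p => (p.1, node p.2 r))

/-- Convolution of tree-expanded series dual to the over product:
`(A / B)_w = Σ_{s / t = w} A_s B_t`. -/
def overConv {R : Type*} [CommRing R] (f g : PBT → R) (w : PBT) : R :=
  ((overFactors w).map (fun p => f p.1 * g p.2)).sum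

/-- Convolution of tree-expanded series dual to the under product:
`(A ∖ B)_w = Σ_{s ∖ t = w} A_s B_t`. -/
def underConv {R : Type*} [CommRing R] (f g : PBT → R) (w : PBT) : R :=
  ((underFactors w).map (fun p => f p.1 * g p.2)).sum

/-- The list of all planar binary trees with `n` internal vertices. -/
def treesOfSize : ℕ → List PBT
  | 0 => [leaf]
  | n + 1 =>
    (List.range (n + 1)).attach.flatMap (fun i =>
      (treesOfSize i.1).flatMap (fun l =>
        (treesOfSize (n - i.1)).map (fun r => node l r)))
  termination_by n => n
  decreasing_by
  · exact Nat.lt_succ_of_le (Nat.sub_le _ _)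
  · exact List.mem_range.mp i.2

/-- `treePow B t` is the series `B^t = μ_t(B,…,B)`, the substitution of the
series `B` in all internal vertices of `t` (duplicial operad composition),
using the decomposition `l ∨ r = (l / Y) ∖ r`. -/
def treePow {R : Type*} [CommRing R] (B : PBT → R) : PBT → PBT → R
  | leaf => fun w => if w = leaf then 1 else 0
  | node l r => underConv (overConv (treePow B l) B) (treePow B r)

/-- Composition of tree-expanded series: `(A ∘ B)_w = Σ_t A_t (B^t)_w`,
where only trees with at most `|w|` vertices can contribute. -/
def comp {R : Type*} [CommRing R] (A B : PBT → R) (w : PBT) : R :=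
  (((List.range (size w + 1)).flatMap treesOfSize).map
    (fun t => A t * treePow B t w)).sum

/-- The series reduced to the one-vertex tree `Y`. -/
def Yser {R : Type*} [CommRing R] : PBT → R :=
  fun t => if t = node leaf leaf then 1 else 0

/-- The series reduced to the root tree `|` (unit for the over/under products). -/
def unitSer {R : Type*} [CommRing R] : PBT → R :=
  fun t => if t = leaf then 1 else 0

/-- Suspension of a tree-expanded series: the coefficient on a tree with `n`
internal vertices is multiplied by `(-1)^(n-1)`. -/
def susp {R : Type*} [CommRing R] (A : PBT → R) : PBT → R :=
  fun t => (-1 : R) ^ (size t + 1) * A t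

/-- One covering step of the Tamari order: a right rotation
`(a ∨ b) ∨ c ⟶ a ∨ (b ∨ c)` somewhere in the tree. -/
inductive TamariStep : PBT → PBT → Prop
  | rot (a b c : PBT) : TamariStep (node (node a b) c) (node a (node b c))
  | left {l l' : PBT} (r : PBT) : TamariStep l l' → TamariStep (node l r) (node l' r)
  | right (l : PBT) {r r' : PBT} : TamariStep r r' → TamariStep (node l r) (node l r')

/-- The Tamari partial order on planar binary trees. -/
def tle : PBT → PBT → Prop := Relation.ReflTransGen TamariStep



variable {R : Type*} [CommRing R]

@[simp] lemma size_leaf : size leaf = 0 := rfl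
@[simp] lemma size_node (l r : PBT) : size (node l r) = size l + size r + 1 := rfl

lemma size_over (u v : PBT) : size (over' u v) = size u + size v := by
  induction v with
  | leaf => simp [over']
  | node l r ihl ihr => simp [over', ihl]; omega

lemma size_under (u v : PBT) : size (under u v) = size u + size v := by
  induction u with
  | leaf => simp [under]
  | node l r ihl ihr => simp [under, ihr]; omega

lemma eq_leaf_of_size_eq_zero {t : PBT} (h : size t = 0) : t = leaf := by
  cases t with
  | leaf => rfl
  | node l r => simp [size] at h

/-! ### List sum helpers -/

lemma sum_map_add' {α : Type*} (L : List α) (f g : α → R) :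
    (L.map (fun a => f a + g a)).sum = (L.map f).sum + (L.map g).sum := by
  induction L with
  | nil => simp
  | cons a L ih => simp [ih]; ring

lemma sum_comm' {α β : Type*} (L : List α) (M : List β) (F : α → β → R) :
    (L.map (fun a => (M.map (fun b => F a b)).sum)).sum
      = (M.map (fun b => (L.map (fun a => F a b)).sum)).sum := by
  induction L with
  | nil => simp [List.sum_eq_zero]
  | cons a L ih => simp only [List.map_cons, List.sum_cons, ih, sum_map_add']

/-! ### Convolution recursions -/

lemma underConv_leaf (f g : PBT → R) : underConv f g leaf = f leaf * g leaf := by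
  simp [underConv, underFactors]

lemma underConv_node (f g : PBT → R) (l r : PBT) :
    underConv f g (node l r)
      = f leaf * g (node l r) + underConv (fun u => f (node l u)) g r := by
  simp [underConv, underFactors, List.map_map, Function.comp_def]

lemma overConv_leaf (f g : PBT → R) : overConv f g leaf = f leaf * g leaf := by
  simp [overConv, overFactors]

lemma overConv_node (f g : PBT → R) (l r : PBT) :
    overConv f g (node l r)
      = f (node l r) * g leaf + overConv f (fun v => g (node v r)) l := by
  simp [overConv, overFactors, List.map_map, Function.comp_def]

lemma underConv_zero_left (g : PBT → R) (w : PBT) :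
    underConv (fun _ => (0 : R)) g w = 0 := by
  simp [underConv]

lemma overConv_zero_right (f : PBT → R) (w : PBT) :
    overConv f (fun _ => (0 : R)) w = 0 := by
  simp [overConv]

lemma underConv_add_left (a b g : PBT → R) (w : PBT) :
    underConv (fun u => a u + b u) g w = underConv a g w + underConv b g w := by
  simp [underConv, add_mul, sum_map_add']

lemma underConv_smul_left (c : R) (a g : PBT → R) (w : PBT) :
    underConv (fun u => c * a u) g w = c * underConv a g w := by
  simp [underConv, mul_assoc, List.sum_map_mul_left]

lemma overConv_add_right (f a b : PBT → R) (w : PBT) :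
    overConv f (fun v => a v + b v) w = overConv f a w + overConv f b w := by
  simp [overConv, mul_add, sum_map_add']

lemma overConv_smul_right (c : R) (f a : PBT → R) (w : PBT) :
    overConv f (fun v => a v * c) w = overConv f a w * c := by
  simp only [overConv, ← mul_assoc, List.sum_map_mul_right]

/-! ### Associativity and exchange laws -/

lemma underConv_assoc (f g h : PBT → R) (w : PBT) :
    underConv (underConv f g) h w = underConv f (underConv g h) w := by
  induction w generalizing f with
  | leaf => simp [underConv_leaf, mul_assoc]
  | node l r ihl ihr =>
    rw [underConv_node (underConv f g) h, underConv_leaf,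
      underConv_node f (underConv g h), underConv_node g h]
    have e1 : (fun u => underConv f g (node l u))
        = fun u => f leaf * g (node l u) + underConv (fun x => f (node l x)) g u := by
      funext u; rw [underConv_node]
    rw [e1, underConv_add_left (fun u => f leaf * g (node l u))
      (underConv (fun x => f (node l x)) g) h r,
      underConv_smul_left (f leaf) (fun u => g (node l u)) h r,
      ihr (fun x => f (node l x))]
    ring

lemma overConv_assoc (f g h : PBT → R) (w : PBT) :
    overConv (overConv f g) h w = overConv f (overConv g h) w := by
  induction w generalizing h with
  | leaf => simp [overConv_leaf, mul_assoc]
  | node l r ihl ihr =>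
    rw [overConv_node (overConv f g) h, overConv_node f g,
      overConv_node f (overConv g h), overConv_leaf]
    have e1 : (fun v => overConv g h (node v r))
        = fun v => g (node v r) * h leaf + overConv g (fun x => h (node x r)) v := by
      funext v; rw [overConv_node]
    rw [e1, overConv_add_right f (fun v => g (node v r) * h leaf)
      (overConv g (fun x => h (node x r))) l,
      overConv_smul_right (h leaf) f (fun v => g (node v r)) l,
      ihl (fun x => h (node x r))]
    ring

lemma under_over_exch (f g h : PBT → R) (hg : g leaf = 0) (w : PBT) :
    underConv (overConv f g) h w = overConv f (underConv g h) w := by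
  cases w with
  | leaf => simp [underConv_leaf, overConv_leaf, hg]
  | node l r =>
    rw [underConv_node, overConv_leaf, hg, mul_zero, zero_mul, zero_add,
      overConv_node, underConv_leaf, hg, zero_mul, mul_zero, zero_add]
    have e1 : (fun u => overConv f g (node l u))
        = fun u => overConv f (fun v => g (node v u)) l := by
      funext u; rw [overConv_node, hg, mul_zero, zero_add]
    have e2 : (fun v => underConv g h (node v r))
        = fun v => underConv (fun u => g (node v u)) h r := by
      funext v; rw [underConv_node, hg, zero_mul, zero_add]
    rw [e1, e2]
    show ((underFactors r).map (fun p =>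
        ((overFactors l).map (fun q => f q.1 * g (node q.2 p.1))).sum * h p.2)).sum
      = ((overFactors l).map (fun q =>
        f q.1 * ((underFactors r).map (fun p => g (node q.2 p.1) * h p.2)).sum)).sum
    have e3 : ∀ p : PBT × PBT,
        ((overFactors l).map (fun q => f q.1 * g (node q.2 p.1))).sum * h p.2
          = ((overFactors l).map (fun q => f q.1 * g (node q.2 p.1) * h p.2)).sum :=
      fun p => (List.sum_map_mul_right (overFactors l)
        (fun q => f q.1 * g (node q.2 p.1)) (h p.2)).symm
    have e4 : ∀ q : PBT × PBT,
        f q.1 * ((underFactors r).map (fun p => g (node q.2 p.1) * h p.2)).sum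
          = ((underFactors r).map (fun p => f q.1 * (g (node q.2 p.1) * h p.2))).sum :=
      fun q => (List.sum_map_mul_left (underFactors r)
        (fun p => g (node q.2 p.1) * h p.2) (f q.1)).symm
    simp only [e3, e4]
    rw [sum_comm']
    simp only [mul_assoc]

/-! ### Units -/

lemma underConv_delta_left (g : PBT → R) :
    underConv (fun t => if t = leaf then (1 : R) else 0) g = g := by
  funext w
  cases w with
  | leaf => simp [underConv_leaf]
  | node l r =>
    rw [underConv_node]
    have e : (fun u => if node l u = leaf then (1 : R) else 0) = fun _ => (0 : R) := by
      funext u; simp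
    rw [e, underConv_zero_left, add_zero, if_pos rfl, one_mul]

lemma overConv_delta_right (f : PBT → R) :
    overConv f (fun t => if t = leaf then (1 : R) else 0) = f := by
  funext w
  cases w with
  | leaf => simp [overConv_leaf]
  | node l r =>
    rw [overConv_node]
    have e : (fun v => if node v r = leaf then (1 : R) else 0) = fun _ => (0 : R) := by
      funext v; simp
    rw [e, overConv_zero_right, add_zero, if_pos rfl, mul_one]

/-! ### treePow equations and morphism properties -/

lemma treePow_leaf (B : PBT → R) :
    treePow B leaf = fun w => if w = leaf then (1 : R) else 0 := rfl

lemma treePow_node (B : PBT → R) (l r : PBT) :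
    treePow B (node l r) = underConv (overConv (treePow B l) B) (treePow B r) := rfl

lemma treePow_under (B : PBT → R) (u v : PBT) :
    treePow B (under u v) = underConv (treePow B u) (treePow B v) := by
  induction u with
  | leaf =>
    show treePow B v = _
    rw [treePow_leaf, underConv_delta_left]
  | node l r ihl ihr =>
    show treePow B (node l (under r v)) = _
    rw [treePow_node, ihr, treePow_node]
    funext w
    rw [underConv_assoc]

lemma treePow_over (B : PBT → R) (hB : B leaf = 0) (u v : PBT) :
    treePow B (over' u v) = overConv (treePow B u) (treePow B v) := by
  induction v with
  | leaf =>
    show treePow B u = _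
    rw [treePow_leaf, overConv_delta_right]
  | node l r ihl ihr =>
    show treePow B (node (over' u l) r) = _
    rw [treePow_node, ihl, treePow_node]
    have e : overConv (overConv (treePow B u) (treePow B l)) B
        = overConv (treePow B u) (overConv (treePow B l) B) := by
      funext w; rw [overConv_assoc]
    rw [e]
    funext w
    rw [under_over_exch _ _ _ (by rw [overConv_leaf, hB, mul_zero])]

lemma over_eq_leaf {a b : PBT} : over' a b = leaf ↔ a = leaf ∧ b = leaf := by
  cases b <;> simp [over']

lemma under_eq_leaf {a b : PBT} : under a b = leaf ↔ a = leaf ∧ b = leaf := by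
  cases a <;> simp [under]
lemma mem_overFactors : ∀ {t : PBT} {p : PBT × PBT}, p ∈ overFactors t ↔ over' p.1 p.2 = t := by
  intro t
  induction t with
  | leaf =>
    rintro ⟨x, y⟩
    simp [overFactors, over_eq_leaf, Prod.ext_iff]
  | node l r ihl ihr =>
    rintro ⟨x, y⟩
    cases y with
    | leaf => simp [overFactors, over', Prod.ext_iff]
    | node a b =>
      simp only [overFactors, List.mem_cons, List.mem_map, Prod.ext_iff, over', ihl]
      constructor
      · rintro (⟨h1, h2⟩ | ⟨q, hq, h1, h2⟩)
        · exact absurd h2 (by simp)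
        · injection h2 with h3 h4
          subst h1; subst h3; subst h4
          rw [hq]
      · intro h
        injection h with h1 h2
        exact Or.inr ⟨(x, a), h1, rfl, by rw [h2]⟩

lemma mem_underFactors : ∀ {t : PBT} {p : PBT × PBT}, p ∈ underFactors t ↔ under p.1 p.2 = t := by
  intro t
  induction t with
  | leaf =>
    rintro ⟨x, y⟩
    simp [underFactors, under_eq_leaf, Prod.ext_iff]
  | node l r ihl ihr =>
    rintro ⟨x, y⟩
    cases x with
    | leaf => simp [underFactors, under, Prod.ext_iff]
    | node a b =>
      simp only [underFactors, List.mem_cons, List.mem_map, Prod.ext_iff, under, ihr]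
      constructor
      · rintro (⟨h1, h2⟩ | ⟨q, hq, h1, h2⟩)
        · exact absurd h1 (by simp)
        · injection h1 with h3 h4
          subst h3; subst h4; subst h2
          rw [hq]
      · intro h
        injection h with h1 h2
        exact Or.inr ⟨(b, y), h2, by rw [h1], rfl⟩

lemma overFactors_nodup : ∀ t : PBT, (overFactors t).Nodup := by
  intro t
  induction t with
  | leaf => simp [overFactors]
  | node l r ihl ihr =>
    rw [overFactors]
    refine List.nodup_cons.2 ⟨?_, ?_⟩
    · intro h
      rcases List.mem_map.1 h with ⟨q, -, hq⟩
      exact PBT.noConfusion (congrArg Prod.snd hq)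
    · refine List.Nodup.map ?_ ihl
      intro q q' h
      injection h with h1 h2
      injection h2 with h3 h4
      exact Prod.ext h1 h3
lemma underFactors_nodup : ∀ t : PBT, (underFactors t).Nodup := by
  intro t
  induction t with
  | leaf => simp [underFactors]
  | node l r ihl ihr =>
    rw [underFactors]
    refine List.nodup_cons.2 ⟨?_, ?_⟩
    · intro h
      rcases List.mem_map.1 h with ⟨q, -, hq⟩
      exact PBT.noConfusion (congrArg Prod.fst hq)
    · refine List.Nodup.map ?_ ihr
      intro q q' h
      injection h with h1 h2
      injection h1 with h3 h4
      exact Prod.ext h4 h2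

/-! ### Lists of trees -/

lemma mem_treesOfSize_self : ∀ t : PBT, t ∈ treesOfSize (size t) := by
  intro t
  induction t with
  | leaf => simp [treesOfSize]
  | node l r ihl ihr =>
    rw [size, treesOfSize]
    refine List.mem_flatMap.2 ⟨⟨size l, List.mem_range.2 (by omega)⟩, List.mem_attach _ _, ?_⟩
    refine List.mem_flatMap.2 ⟨l, ihl, ?_⟩
    refine List.mem_map.2 ⟨r, ?_, rfl⟩
    have e : size l + size r - size l = size r := by omega
    rw [e]
    exact ihr

lemma size_of_mem_treesOfSize : ∀ n : ℕ, ∀ t ∈ treesOfSize n, size t = n := by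
  intro n
  induction n using Nat.strong_induction_on with
  | _ n ih =>
    cases n with
    | zero =>
      intro t ht
      simp only [treesOfSize, List.mem_singleton] at ht
      subst ht; rfl
    | succ m =>
      intro t ht
      rw [treesOfSize] at ht
      obtain ⟨i, -, hi⟩ := List.mem_flatMap.1 ht
      obtain ⟨l, hl, hr'⟩ := List.mem_flatMap.1 hi
      obtain ⟨r, hr, rfl⟩ := List.mem_map.1 hr'
      have hilt : i.1 < m + 1 := List.mem_range.1 i.2
      have h1 := ih i.1 (by omega) l hl
      have h2 := ih (m - i.1) (by omega) r hr
      rw [size, h1, h2]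
      omega

lemma treesOfSize_nodup : ∀ n : ℕ, (treesOfSize n).Nodup := by
  intro n
  induction n using Nat.strong_induction_on with
  | _ n ih =>
    cases n with
    | zero => simp [treesOfSize]
    | succ m =>
      rw [treesOfSize]
      refine List.nodup_flatMap.2 ⟨?_, ?_⟩
      · intro i _
        have hilt : i.1 < m + 1 := List.mem_range.1 i.2
        refine List.nodup_flatMap.2 ⟨?_, ?_⟩
        · intro l _
          refine List.Nodup.map ?_ (ih (m - i.1) (by omega))
          intro r r' h
          injection h
        · refine List.Pairwise.imp ?_ (ih i.1 (by omega))
          intro a b hne x hx1 hx2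
          rcases List.mem_map.1 hx1 with ⟨r1, -, rfl⟩
          rcases List.mem_map.1 hx2 with ⟨r2, -, h⟩
          injection h with h1 h2
          exact hne h1.symm
      · refine List.Pairwise.imp ?_ (List.nodup_attach.2 List.nodup_range)
        intro a b hne x hx1 hx2
        obtain ⟨l1, hl1, hx1'⟩ := List.mem_flatMap.1 hx1
        obtain ⟨r1, -, rfl⟩ := List.mem_map.1 hx1'
        obtain ⟨l2, hl2, hx2'⟩ := List.mem_flatMap.1 hx2
        obtain ⟨r2, -, h⟩ := List.mem_map.1 hx2'
        injection h with h1 h2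
        have e1 := size_of_mem_treesOfSize a.1 l1 hl1
        have e2 := size_of_mem_treesOfSize b.1 l2 hl2
        exact hne (Subtype.ext (by rw [← e1, ← e2, h1]))

def allTrees (n : ℕ) : List PBT := (List.range (n + 1)).flatMap treesOfSize

lemma mem_allTrees {n : ℕ} {t : PBT} : t ∈ allTrees n ↔ size t ≤ n := by
  simp only [allTrees, List.mem_flatMap, List.mem_range]
  constructor
  · rintro ⟨i, hi, ht⟩
    have := size_of_mem_treesOfSize i t ht
    omega
  · intro h
    exact ⟨size t, by omega, mem_treesOfSize_self t⟩

lemma allTrees_nodup (n : ℕ) : (allTrees n).Nodup := by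
  refine List.nodup_flatMap.2 ⟨fun i _ => treesOfSize_nodup i, ?_⟩
  refine List.Pairwise.imp ?_ List.nodup_range
  intro a b hne t ht1 ht2
  exact hne ((size_of_mem_treesOfSize a t ht1).symm.trans (size_of_mem_treesOfSize b t ht2))

/-! ### Vanishing -/

lemma treePow_vanish (B : PBT → R) (hB : B leaf = 0) :
    ∀ (t w : PBT), size w < size t → treePow B t w = 0 := by
  intro t
  induction t with
  | leaf => intro w h; simp [size] at h
  | node l r ihl ihr =>
    intro w h
    rw [treePow_node]
    show ((underFactors w).map
      (fun p => overConv (treePow B l) B p.1 * treePow B r p.2)).sum = 0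
    apply List.sum_eq_zero
    intro x hx
    rcases List.mem_map.1 hx with ⟨p, hp, rfl⟩
    have hpw : under p.1 p.2 = w := mem_underFactors.1 hp
    have hsz : size p.1 + size p.2 = size w := by rw [← hpw, size_under]
    by_cases hr : size p.2 < size r
    · rw [ihr p.2 hr, mul_zero]
    · have hszw : size w < size l + size r + 1 := by rw [size] at h; omega
      have h1 : size p.1 ≤ size l := by omega
      have hz : overConv (treePow B l) B p.1 = 0 := by
        show ((overFactors p.1).map (fun q => treePow B l q.1 * B q.2)).sum = 0
        apply List.sum_eq_zero
        intro y hy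
        rcases List.mem_map.1 hy with ⟨q, hq, rfl⟩
        have hq' : over' q.1 q.2 = p.1 := mem_overFactors.1 hq
        have hsz2 : size q.1 + size q.2 = size p.1 := by rw [← hq', size_over]
        by_cases hl : size q.1 < size l
        · rw [ihl q.1 hl, zero_mul]
        · have hz2 : size q.2 = 0 := by omega
          rw [eq_leaf_of_size_eq_zero hz2, hB, mul_zero]
      rw [hz, zero_mul]

/-! ### comp as a Finset sum -/

lemma comp_eq_finset (A B : PBT → R) (hB : B leaf = 0) (n : ℕ) (u : PBT) (h : size u ≤ n) :
    comp A B u = ∑ t ∈ (allTrees n).toFinset, A t * treePow B t u := by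
  have h1 : comp A B u = ((allTrees (size u)).map (fun t => A t * treePow B t u)).sum := rfl
  rw [h1, ← List.sum_toFinset _ (allTrees_nodup (size u))]
  apply Finset.sum_subset
  · intro t ht
    rw [List.mem_toFinset, mem_allTrees] at *
    omega
  · intro t ht hnt
    rw [List.mem_toFinset, mem_allTrees] at ht hnt
    rw [treePow_vanish B hB t u (by omega), mul_zero]

/-! ### Main auxiliary lemma -/

lemma main_aux (op : PBT → PBT → PBT) (fac : PBT → List (PBT × PBT))
    (hsize : ∀ s t : PBT, size (op s t) = size s + size t)
    (hmem : ∀ (p : PBT × PBT) (t : PBT), p ∈ fac t ↔ op p.1 p.2 = t)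
    (hnodup : ∀ t : PBT, (fac t).Nodup)
    (A D C : PBT → R) (hC0 : C leaf = 0)
    (hpow : ∀ s t w : PBT, treePow C (op s t) w
      = ((fac w).map (fun p => treePow C s p.1 * treePow C t p.2)).sum)
    (w : PBT) :
    comp (fun t => ((fac t).map (fun p => A p.1 * D p.2)).sum) C w
      = ((fac w).map (fun p => comp A C p.1 * comp D C p.2)).sum := by
  classical
  set n := size w with hn
  set T : Finset PBT := (allTrees n).toFinset with hT
  have hTmem : ∀ {t : PBT}, t ∈ T ↔ size t ≤ n := fun {t} => by
    rw [hT, List.mem_toFinset, mem_allTrees]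
  set F : PBT × PBT → R := fun p => A p.1 * D p.2 * treePow C (op p.1 p.2) w with hF
  set s : Finset (PBT × PBT) := (T ×ˢ T).filter (fun p => op p.1 p.2 ∈ T) with hs
  -- LHS
  have lhs1 : comp (fun t => ((fac t).map (fun p => A p.1 * D p.2)).sum) C w
      = ∑ t ∈ T, (∑ p ∈ (fac t).toFinset, A p.1 * D p.2) * treePow C t w := by
    have h0 : comp (fun t => ((fac t).map (fun p => A p.1 * D p.2)).sum) C w
        = ((allTrees n).map
            (fun t => ((fac t).map (fun p => A p.1 * D p.2)).sum * treePow C t w)).sum := rfl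
    rw [h0, ← List.sum_toFinset _ (allTrees_nodup n)]
    refine Finset.sum_congr rfl fun t ht => ?_
    rw [List.sum_toFinset _ (hnodup t)]
  have lhs2 : ∑ t ∈ T, (∑ p ∈ (fac t).toFinset, A p.1 * D p.2) * treePow C t w
      = ∑ t ∈ T, ∑ p ∈ (fac t).toFinset, F p := by
    refine Finset.sum_congr rfl fun t ht => ?_
    rw [Finset.sum_mul]
    refine Finset.sum_congr rfl fun p hp => ?_
    rw [List.mem_toFinset] at hp
    rw [hF]
    dsimp only
    rw [(hmem p t).1 hp]
  have fib : ∀ t ∈ T, (fac t).toFinset = s.filter (fun p => op p.1 p.2 = t) := by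
    intro t ht
    ext p
    simp only [List.mem_toFinset, Finset.mem_filter, Finset.mem_product, hmem, hs]
    constructor
    · intro h
      have hsz := hsize p.1 p.2
      rw [h] at hsz
      have htn : size t ≤ n := hTmem.1 ht
      exact ⟨⟨⟨hTmem.2 (by omega), hTmem.2 (by omega)⟩, h ▸ ht⟩, h⟩
    · rintro ⟨-, h⟩
      exact h
  have lhs3 : ∑ t ∈ T, ∑ p ∈ (fac t).toFinset, F p = ∑ p ∈ s, F p := by
    have e : (∑ t ∈ T, ∑ p ∈ (fac t).toFinset, F p)
        = ∑ t ∈ T, ∑ p ∈ s.filter (fun p => op p.1 p.2 = t), F p :=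
      Finset.sum_congr rfl (fun t ht => by rw [fib t ht])
    rw [e]
    exact Finset.sum_fiberwise_of_maps_to (fun p hp => (Finset.mem_filter.1 hp).2) F
  have lhs4 : ∑ p ∈ s, F p = ∑ p ∈ T ×ˢ T, F p := by
    apply Finset.sum_subset (Finset.filter_subset _ _)
    intro p hp hnp
    have hop : op p.1 p.2 ∉ T := fun hm => hnp (Finset.mem_filter.2 ⟨hp, hm⟩)
    rw [hTmem] at hop
    rw [hF]
    dsimp only
    rw [treePow_vanish C hC0 _ w (by omega), mul_zero]
  -- RHS
  have rhs1 : ((fac w).map (fun p => comp A C p.1 * comp D C p.2)).sum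
      = ∑ p ∈ (fac w).toFinset, ∑ a ∈ T, ∑ b ∈ T,
          (A a * treePow C a p.1) * (D b * treePow C b p.2) := by
    rw [← List.sum_toFinset _ (hnodup w)]
    refine Finset.sum_congr rfl fun p hp => ?_
    rw [List.mem_toFinset] at hp
    have hsz := hsize p.1 p.2
    rw [(hmem p w).1 hp] at hsz
    rw [comp_eq_finset A C hC0 n p.1 (by omega), comp_eq_finset D C hC0 n p.2 (by omega),
      Finset.sum_mul_sum]
  have rhs2 : ∑ p ∈ (fac w).toFinset, ∑ a ∈ T, ∑ b ∈ T,
        (A a * treePow C a p.1) * (D b * treePow C b p.2)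
      = ∑ a ∈ T, ∑ b ∈ T, F (a, b) := by
    rw [Finset.sum_comm]
    refine Finset.sum_congr rfl fun a _ => ?_
    rw [Finset.sum_comm]
    refine Finset.sum_congr rfl fun b _ => ?_
    have e : F (a, b) = A a * D b *
        ∑ p ∈ (fac w).toFinset, treePow C a p.1 * treePow C b p.2 := by
      rw [hF]
      dsimp only
      rw [hpow a b w, List.sum_toFinset _ (hnodup w)]
    rw [e, Finset.mul_sum]
    refine Finset.sum_congr rfl fun p _ => ?_
    ring
  rw [lhs1, lhs2, lhs3, lhs4, rhs1, rhs2, Finset.sum_product]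

end PBT

open PBT in
/-- composition of tree-expanded series distributes on the right
over' the over' and under convolution products. -/
theorem comp_right_distrib (R : Type*) [CommRing R] (A D C : PBT → R)
    (hA0 : A PBT.leaf = 0) (hD0 : D PBT.leaf = 0) (hC0 : C PBT.leaf = 0) :
    comp (overConv A D) C = overConv (comp A C) (comp D C) ∧
    comp (underConv A D) C = underConv (comp A C) (comp D C) := by
  constructor
  · funext w
    exact main_aux over' overFactors size_over (fun p t => mem_overFactors)
      overFactors_nodup A D C hC0
      (fun s t w => by rw [treePow_over C hC0 s t]; rfl) w
  · funext w
    exact main_aux under underFactors size_under (fun p t => mem_underFactors)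
      underFactors_nodup A D C hC0
      (fun s t w => by rw [treePow_under C s t]; rfl) w
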